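/- For all nonnegative integers k and j, the orthonormalized Hermite polynomials h_k defined by the recurrence h_0(x) = π^{-1/4}, h_1(x) = √2 · π^{-1/4} · x, and h_k(x) = √(2/k) · x · h_{k-1}(x) − √((k−1)/k) · h_{k-2}(x) for k ≥ 2, satisfy the orthonormality relation ∫_ℝ h_k(x) h_j(x) e^{−x²} dx = 1 if k = j and 0 otherwise. -/

import Mathlib

open MeasureTheory

/-- The orthonormalized Hermite polynomials, defined by the three-term recurrence
`h 0 x = π^(-1/4)`, `h 1 x = √2 · π^(-1/4) · x`,
`h k x = √(2/k) · x · h (k-1) x − √((k−1)/k) · h (k-2) x` for `k ≥ 2`. -/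
noncomputable def hermiteOrtho : ℕ → ℝ → ℝ
  | 0, _ => Real.pi ^ (-(1 : ℝ) / 4)
  | 1, x => Real.sqrt 2 * Real.pi ^ (-(1 : ℝ) / 4) * x
  | (k + 2), x =>
      Real.sqrt (2 / ((k : ℝ) + 2)) * x * hermiteOrtho (k + 1) x -
        Real.sqrt (((k : ℝ) + 1) / ((k : ℝ) + 2)) * hermiteOrtho k x

open Polynomial Real Filter

noncomputable def PH : ℕ → Polynomial ℝ
  | 0 => 1
  | n + 1 => 2 * X * PH n - derivative (PH n)

lemma PH_deriv (n : ℕ) : derivative (PH (n + 1)) = C (2 * ((n : ℝ) + 1)) * PH n := by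
  induction n with
  | zero =>
      show derivative (2 * X * PH 0 - derivative (PH 0)) = _
      simp only [PH, derivative_one, sub_zero, mul_one, derivative_mul, derivative_X,
        derivative_ofNat, Nat.cast_zero, zero_add, mul_one, map_ofNat]
      ring
  | succ n ih =>
      show derivative (2 * X * PH (n + 1) - derivative (PH (n + 1))) = _
      rw [derivative_sub, derivative_mul, ih, derivative_mul]
      have h2 : PH (n + 1) = 2 * X * PH n - derivative (PH n) := rfl
      rw [h2]
      simp only [derivative_C, derivative_mul, derivative_X, derivative_ofNat, derivative_natCast, derivative_one, map_mul, map_add,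
        map_ofNat, map_one, C_eq_natCast]
      push_cast
      ring

lemma PH_natDegree_le (n : ℕ) : (PH n).natDegree ≤ n := by
  induction n with
  | zero => simp [PH]
  | succ n ih =>
      show (2 * X * PH n - derivative (PH n)).natDegree ≤ n + 1
      refine (natDegree_sub_le _ _).trans (max_le ?_ ?_)
      · refine (natDegree_mul_le).trans ?_
        have : ((2 : ℝ[X]) * X).natDegree ≤ 1 :=
          natDegree_mul_le.trans (by simp)
        omega
      · exact (natDegree_derivative_le _).trans (by omega)

lemma PH_iterate_zero {k j : ℕ} (h : j < k) : derivative^[k] (PH j) = 0 :=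
  iterate_derivative_eq_zero ((PH_natDegree_le j).trans_lt h)

lemma PH_iterate_self (n : ℕ) :
    derivative^[n] (PH n) = C ((2 : ℝ) ^ n * n.factorial) := by
  induction n with
  | zero => simp [PH]
  | succ n ih =>
      rw [Function.iterate_succ_apply, PH_deriv, iterate_derivative_C_mul, ih, ← C_mul]
      congr 1
      push_cast [Nat.factorial_succ]
      ring

lemma gauss_hasDerivAt (x : ℝ) :
    HasDerivAt (fun y : ℝ => Real.exp (-(y ^ 2))) (-(2 * x) * Real.exp (-(x ^ 2))) x := by
  have h : HasDerivAt (fun y : ℝ => -(y ^ 2)) (-(2 * x)) x := by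
    simpa [Pi.neg_def] using (hasDerivAt_pow 2 x).neg
  simpa [mul_comm] using h.exp

lemma rodrigues (n : ℕ) (x : ℝ) :
    deriv^[n] (fun y : ℝ => Real.exp (-(y ^ 2))) x =
      (-1 : ℝ) ^ n * aeval x (PH n) * Real.exp (-(x ^ 2)) := by
  induction n generalizing x with
  | zero => simp [PH]
  | succ n ih =>
      replace ih : deriv^[n] _ = _ := funext ih
      rw [Function.iterate_succ_apply', ih]
      have hd : ∀ y : ℝ, DifferentiableAt ℝ (fun z : ℝ => Real.exp (-(z ^ 2))) y :=
        fun y => (gauss_hasDerivAt y).differentiableAt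
      rw [deriv_fun_mul ((Polynomial.differentiable_aeval _ _).const_mul _) (hd x),
        deriv_const_mul _ (Polynomial.differentiable_aeval _ _),
        Polynomial.deriv_aeval, (gauss_hasDerivAt x).deriv]
      have h2 : PH (n + 1) = 2 * X * PH n - derivative (PH n) := rfl
      rw [h2]
      simp only [map_sub, map_mul, map_ofNat, aeval_X, pow_succ]
      ring

lemma integrable_pow_gauss (n : ℕ) :
    Integrable fun x : ℝ => x ^ n * Real.exp (-(x ^ 2)) := by
  have hbound : Integrable fun x : ℝ =>
      ((n.factorial : ℝ) * Real.exp 1) * Real.exp (-(3/4) * x ^ 2) :=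
    (integrable_exp_neg_mul_sq (by norm_num : (0:ℝ) < 3/4)).const_mul _
  refine hbound.mono' ?_ (Filter.Eventually.of_forall fun x => ?_)
  · exact ((continuous_pow n).mul (continuous_pow 2).neg.rexp).aestronglyMeasurable
  · rw [norm_mul, norm_pow, Real.norm_eq_abs, Real.norm_eq_abs,
      abs_of_pos (Real.exp_pos _)]
    have h1 : |x| ^ n ≤ (n.factorial : ℝ) * Real.exp |x| := by
      have h2 : |x| ^ n / n.factorial ≤ Real.exp |x| := by
        calc |x| ^ n / n.factorial
            ≤ ∑ i ∈ Finset.range (n + 1), |x| ^ i / i.factorial := by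
              refine Finset.single_le_sum (f := fun i => |x| ^ i / (i.factorial : ℝ))
                (fun i _ => by positivity) (Finset.self_mem_range_succ n)
          _ ≤ Real.exp |x| := Real.sum_le_exp_of_nonneg (abs_nonneg x) _
      have hn : (0:ℝ) < n.factorial := by positivity
      calc |x| ^ n = (|x| ^ n / n.factorial) * n.factorial := by field_simp
        _ ≤ Real.exp |x| * n.factorial := by
            exact mul_le_mul_of_nonneg_right h2 hn.le
        _ = (n.factorial : ℝ) * Real.exp |x| := by ring
    have h3 : Real.exp |x| ≤ Real.exp (x ^ 2 / 4 + 1) := by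
      apply Real.exp_le_exp.2
      nlinarith [sq_nonneg (|x| - 2), sq_abs x]
    calc |x| ^ n * Real.exp (-(x ^ 2))
        ≤ ((n.factorial : ℝ) * Real.exp (x ^ 2 / 4 + 1)) * Real.exp (-(x ^ 2)) := by
          refine mul_le_mul_of_nonneg_right (h1.trans ?_) (Real.exp_pos _).le
          exact mul_le_mul_of_nonneg_left h3 (by positivity)
      _ = (n.factorial : ℝ) * Real.exp 1 * Real.exp (-(3/4) * x ^ 2) := by
          rw [mul_assoc, mul_assoc, ← Real.exp_add, ← Real.exp_add]
          ring_nf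

lemma integrable_poly_gauss (p : Polynomial ℝ) :
    Integrable fun x : ℝ => aeval x p * Real.exp (-(x ^ 2)) := by
  induction p using Polynomial.induction_on' with
  | add p q hp hq => simpa [add_mul, Pi.add_def] using hp.add hq
  | monomial n a =>
      simpa [aeval_monomial, mul_assoc] using (integrable_pow_gauss n).const_mul a

lemma integrable_poly_iter_gauss (p : Polynomial ℝ) (m : ℕ) :
    Integrable fun x : ℝ => aeval x p * deriv^[m] (fun y : ℝ => Real.exp (-(y ^ 2))) x := by
  refine ((integrable_poly_gauss (p * PH m)).const_mul ((-1 : ℝ) ^ m)).congr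
    (Filter.Eventually.of_forall fun x => ?_)
  simp only [rodrigues, map_mul]
  ring

lemma hasDerivAt_iter_gauss (m : ℕ) (x : ℝ) :
    HasDerivAt (deriv^[m] (fun y : ℝ => Real.exp (-(y ^ 2))))
      (deriv^[m + 1] (fun y : ℝ => Real.exp (-(y ^ 2))) x) x := by
  have hfe : deriv^[m] (fun y : ℝ => Real.exp (-(y ^ 2))) =
      fun x : ℝ => (-1 : ℝ) ^ m * aeval x (PH m) * Real.exp (-(x ^ 2)) := funext (rodrigues m)
  rw [Function.iterate_succ_apply', hfe]
  have hdiff : DifferentiableAt ℝ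
      (fun x : ℝ => (-1 : ℝ) ^ m * aeval x (PH m) * Real.exp (-(x ^ 2))) x :=
    ((Polynomial.differentiable_aeval _ _).const_mul _).mul
      (gauss_hasDerivAt x).differentiableAt
  exact hdiff.hasDerivAt

lemma ibp_step (p : Polynomial ℝ) (m : ℕ) :
    (∫ x : ℝ, aeval x p * deriv^[m + 1] (fun y : ℝ => Real.exp (-(y ^ 2))) x) =
      - ∫ x : ℝ, aeval x (derivative p) * deriv^[m] (fun y : ℝ => Real.exp (-(y ^ 2))) x := by
  refine integral_mul_deriv_eq_deriv_mul_of_integrable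
    (u := fun x => aeval x p) (u' := fun x => aeval x (derivative p))
    (v := deriv^[m] (fun y : ℝ => Real.exp (-(y ^ 2))))
    (v' := deriv^[m + 1] (fun y : ℝ => Real.exp (-(y ^ 2))))
    (fun x _ => p.hasDerivAt_aeval x) (fun x _ => hasDerivAt_iter_gauss m x)
    ?_ ?_ ?_
  · exact integrable_poly_iter_gauss p (m + 1)
  · exact integrable_poly_iter_gauss (derivative p) m
  · exact integrable_poly_iter_gauss p m

lemma key (k : ℕ) (p : Polynomial ℝ) :
    (∫ x : ℝ, aeval x p * deriv^[k] (fun y : ℝ => Real.exp (-(y ^ 2))) x) =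
      (-1 : ℝ) ^ k * ∫ x : ℝ, aeval x (derivative^[k] p) * Real.exp (-(x ^ 2)) := by
  induction k generalizing p with
  | zero => simp
  | succ k ih =>
      rw [ibp_step p k, ih (derivative p), ← Function.iterate_succ_apply, pow_succ]
      ring

lemma integral_gauss : (∫ x : ℝ, Real.exp (-(x ^ 2))) = Real.sqrt π := by
  have h := integral_gaussian 1
  simpa using h

lemma neg_one_pow_sq (k : ℕ) : ((-1 : ℝ) ^ k) * ((-1 : ℝ) ^ k) = 1 := by
  rw [← mul_pow]; norm_num

lemma PH_ortho {j k : ℕ} (h : j ≤ k) :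
    (∫ x : ℝ, aeval x (PH k) * aeval x (PH j) * Real.exp (-(x ^ 2))) =
      if k = j then (2 : ℝ) ^ k * k.factorial * Real.sqrt π else 0 := by
  have step1 : (∫ x : ℝ, aeval x (PH k) * aeval x (PH j) * Real.exp (-(x ^ 2))) =
      (-1 : ℝ) ^ k * ∫ x : ℝ, aeval x (PH j) *
        deriv^[k] (fun y : ℝ => Real.exp (-(y ^ 2))) x := by
    rw [← integral_const_mul]
    congr 1
    funext x
    rw [rodrigues]
    linear_combination (-(aeval x (PH k) * aeval x (PH j) * Real.exp (-(x ^ 2)))) *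
      (neg_one_pow_sq k)
  rw [step1, key]
  rcases eq_or_lt_of_le h with rfl | hlt
  · rw [if_pos rfl, PH_iterate_self]
    simp only [aeval_C, Algebra.algebraMap_self_apply]
    rw [integral_const_mul, integral_gauss, ← mul_assoc, ← mul_assoc, neg_one_pow_sq]
    ring
  · rw [if_neg (by omega), PH_iterate_zero hlt]
    simp

noncomputable def A (m : ℕ) : ℝ := Real.sqrt ((2 : ℝ) ^ m * m.factorial * Real.sqrt π)

lemma A_pos (m : ℕ) : 0 < A m := Real.sqrt_pos.2 (by positivity)

lemma A_sq (m : ℕ) : (A m) ^ 2 = (2 : ℝ) ^ m * m.factorial * Real.sqrt π :=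
  Real.sq_sqrt (by positivity)

lemma eq_of_sq {a b : ℝ} (ha : 0 ≤ a) (hb : 0 ≤ b) (h : a ^ 2 = b ^ 2) : a = b := by
  rw [← Real.sqrt_sq ha, h, Real.sqrt_sq hb]

lemma pi_rpow_sq : (π ^ (-(1 : ℝ) / 4)) ^ 2 = (Real.sqrt π)⁻¹ := by
  rw [← Real.rpow_natCast (π ^ (-(1 : ℝ) / 4)) 2, ← Real.rpow_mul Real.pi_pos.le]
  rw [Real.sqrt_eq_rpow, ← Real.rpow_neg Real.pi_pos.le]
  norm_num

lemma hermiteOrtho_eq (k : ℕ) : ∀ x : ℝ, hermiteOrtho k x = (A k)⁻¹ * aeval x (PH k) := by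
  induction k using Nat.twoStepInduction with
  | zero =>
      intro x
      show π ^ (-(1 : ℝ) / 4) = (A 0)⁻¹ * aeval x (PH 0)
      have hA : A 0 = Real.sqrt (Real.sqrt π) := by simp [A]
      simp only [hA, PH, map_one, mul_one]
      refine eq_of_sq (by positivity) (by positivity) ?_
      rw [pi_rpow_sq, inv_pow, Real.sq_sqrt (Real.sqrt_nonneg π)]
  | one =>
      intro x
      show Real.sqrt 2 * π ^ (-(1 : ℝ) / 4) * x = (A 1)⁻¹ * aeval x (PH 1)
      have hPH1 : (PH 1) = 2 * X := by simp [PH]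
      rw [hPH1]
      simp only [map_mul, map_ofNat, aeval_X]
      have hcoef : Real.sqrt 2 * π ^ (-(1 : ℝ) / 4) = (A 1)⁻¹ * 2 := by
        refine eq_of_sq (by positivity)
          (mul_nonneg (inv_nonneg.2 (A_pos _).le) (by norm_num)) ?_
        rw [mul_pow, mul_pow, pi_rpow_sq, Real.sq_sqrt (by norm_num : (0:ℝ) ≤ 2), inv_pow, A_sq]
        have h1 : Real.sqrt π ≠ 0 := by positivity
        field_simp
        ring
      linear_combination x * hcoef
  | more n ih ih1 =>
      intro x
      have hrec : hermiteOrtho (n + 2) x =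
          Real.sqrt (2 / ((n : ℝ) + 2)) * x * hermiteOrtho (n + 1) x -
            Real.sqrt (((n : ℝ) + 1) / ((n : ℝ) + 2)) * hermiteOrtho n x := rfl
      have hPH : (PH (n + 2)) = 2 * X * PH (n + 1) - C (2 * ((n : ℝ) + 1)) * PH n := by
        show 2 * X * PH (n + 1) - derivative (PH (n + 1)) = _
        rw [PH_deriv]
      have hfac2 : ((n + 2).factorial : ℝ) = ((n : ℝ) + 2) * ((n + 1).factorial : ℝ) := by
        rw [Nat.factorial_succ]; push_cast; ring
      have hfac1 : ((n + 1).factorial : ℝ) = ((n : ℝ) + 1) * (n.factorial : ℝ) := by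
        rw [Nat.factorial_succ]; push_cast; ring
      have hsπ : Real.sqrt π ≠ 0 := by positivity
      have hn2 : ((n : ℝ) + 2) ≠ 0 := by positivity
      have hn1 : ((n : ℝ) + 1) ≠ 0 := by positivity
      have hfn : (n.factorial : ℝ) ≠ 0 := by positivity
      have e1 : Real.sqrt (2 / ((n : ℝ) + 2)) * (A (n + 1))⁻¹ = (A (n + 2))⁻¹ * 2 := by
        refine eq_of_sq (mul_nonneg (Real.sqrt_nonneg _) (inv_nonneg.2 (A_pos _).le))
          (mul_nonneg (inv_nonneg.2 (A_pos _).le) (by norm_num)) ?_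
        rw [mul_pow, mul_pow, Real.sq_sqrt (by positivity : (0:ℝ) ≤ 2 / ((n : ℝ) + 2)),
          inv_pow, inv_pow, A_sq, A_sq, hfac2, hfac1]
        field_simp
        ring
      have e2 : Real.sqrt (((n : ℝ) + 1) / ((n : ℝ) + 2)) * (A n)⁻¹ =
          (A (n + 2))⁻¹ * (2 * ((n : ℝ) + 1)) := by
        refine eq_of_sq (mul_nonneg (Real.sqrt_nonneg _) (inv_nonneg.2 (A_pos _).le))
          (mul_nonneg (inv_nonneg.2 (A_pos _).le) (by positivity)) ?_
        rw [mul_pow, mul_pow, Real.sq_sqrt (by positivity : (0:ℝ) ≤ ((n : ℝ) + 1) / ((n : ℝ) + 2)),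
          inv_pow, inv_pow, A_sq, A_sq, hfac2, hfac1]
        field_simp
        ring
      rw [hrec, ih1 x, ih x, hPH]
      simp only [map_sub, map_mul, map_ofNat, aeval_X, aeval_C]
      push_cast
      linear_combination (x * aeval x (PH (n + 1))) * e1 - (aeval x (PH n)) * e2


/-- Orthonormality of the Hermite polynomials with respect to the weight `e^(−x²)`:
`∫ h_k(x) h_j(x) e^(−x²) dx = δ_{kj}`. -/
theorem hermiteOrtho_orthonormal (k j : ℕ) :
    (∫ x : ℝ, hermiteOrtho k x * hermiteOrtho j x * Real.exp (-(x ^ 2))) =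
      if k = j then 1 else 0 := by
  have main : ∀ a b : ℕ, b ≤ a →
      (∫ x : ℝ, hermiteOrtho a x * hermiteOrtho b x * Real.exp (-(x ^ 2))) =
        if a = b then 1 else 0 := by
    intro a b hba
    have hfe : (fun x : ℝ => hermiteOrtho a x * hermiteOrtho b x * Real.exp (-(x ^ 2)))
        = fun x : ℝ => (A a)⁻¹ * (A b)⁻¹ *
            (aeval x (PH a) * aeval x (PH b) * Real.exp (-(x ^ 2))) := by
      funext x; rw [hermiteOrtho_eq, hermiteOrtho_eq]; ring
    rw [hfe, integral_const_mul, PH_ortho hba]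
    by_cases hab : a = b
    · subst hab
      rw [if_pos rfl, if_pos rfl, ← A_sq, pow_two]
      field_simp [(A_pos a).ne']
    · simp [hab]
  rcases le_total j k with h | h
  · exact main k j h
  · calc (∫ x : ℝ, hermiteOrtho k x * hermiteOrtho j x * Real.exp (-(x ^ 2)))
        = ∫ x : ℝ, hermiteOrtho j x * hermiteOrtho k x * Real.exp (-(x ^ 2)) := by
          congr 1; funext x; ring
      _ = if j = k then 1 else 0 := main j k h
      _ = if k = j then 1 else 0 := by simp [eq_comm]
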